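/- arXiv:2503.00787 — 3 statements merged into one kernel-verified Lean document; each statement's English description precedes it below -/
import Mathlib

section
/- Let g ≥ 2 be an integer, let D > 3 be a squarefree positive integer, and let X, Y be positive integers with X² + D = 4Y^g. Then X is odd, D ≡ 3 (mod 4), gcd(X, Y) = 1, the element (X + √−D)/2 lies in the ring of integers O of the imaginary quadratic field K = ℚ(√−D), and there exists an integral ideal 𝔞 of O such that 𝔞^g equals the principal ideal generated by (X + √−D)/2; in particular the absolute norm of 𝔞 equals Y. -/
open NumberField IntermediateField Polynomial

/-- The complex number `√-d = i·√d`. -/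
noncomputable def sqrtNeg (d : ℕ) : ℂ := Complex.I * Real.sqrt d

theorem isIntegral_sqrtNeg (d : ℕ) : IsIntegral ℚ (sqrtNeg d) := by
  refine ⟨X ^ 2 + C (d : ℚ), monic_X_pow_add_C _ two_ne_zero, ?_⟩
  have h : ((Real.sqrt d : ℝ) : ℂ) ^ 2 = (d : ℂ) := by
    rw [← Complex.ofReal_pow, Real.sq_sqrt (Nat.cast_nonneg d)]
    simp
  simp only [eval₂_add, eval₂_pow, eval₂_X, eval₂_C, sqrtNeg, mul_pow, Complex.I_sq, h]
  push_cast
  ring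

/-- The imaginary quadratic field `K = ℚ(√-d)`, realized inside `ℂ`. -/
noncomputable def Kneg (d : ℕ) : IntermediateField ℚ ℂ := ℚ⟮sqrtNeg d⟯

instance (d : ℕ) : FiniteDimensional ℚ (Kneg d) :=
  IntermediateField.adjoin.finiteDimensional (isIntegral_sqrtNeg d)

instance (d : ℕ) : NumberField (Kneg d) := ⟨⟩

lemma elemFacts (g D x y : ℕ) (hg : 2 ≤ g) (hsf : Squarefree D)
    (h : x ^ 2 + D = 4 * y ^ g) :
    Odd x ∧ D % 4 = 3 ∧ Nat.gcd x y = 1 ∧ Nat.gcd x D = 1 := by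
  have hxodd : Odd x := by
    rw [Nat.odd_iff]
    by_contra hx
    obtain ⟨k, rfl⟩ : 2 ∣ x := Nat.dvd_of_mod_eq_zero (by omega)
    have hk : 4 * k ^ 2 + D = 4 * y ^ g := by rw [← h]; ring
    have h4 : 2 * 2 ∣ D := by
      refine ⟨y ^ g - k ^ 2, ?_⟩
      have hle : k ^ 2 ≤ y ^ g := by nlinarith
      omega
    exact (Nat.prime_two).not_isUnit (hsf 2 h4)
  have hD4 : D % 4 = 3 := by
    obtain ⟨k, rfl⟩ := hxodd
    have hk : (4 * (k ^ 2 + k) + 1) + D = 4 * y ^ g := by rw [← h]; ring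
    generalize k ^ 2 + k = a at hk
    generalize y ^ g = b at hk
    omega
  have hgxy : Nat.gcd x y = 1 := by
    by_contra hne
    obtain ⟨p, pp, pdvd⟩ := Nat.exists_prime_and_dvd hne
    have px : p ∣ x := pdvd.trans (Nat.gcd_dvd_left x y)
    have py : p ∣ y := pdvd.trans (Nat.gcd_dvd_right x y)
    have hp2 : p ≠ 2 := by
      rintro rfl
      rw [Nat.odd_iff] at hxodd
      obtain ⟨c, rfl⟩ := px
      omega
    have h1 : p * p ∣ x ^ 2 := by
      have := pow_dvd_pow_of_dvd px 2
      rwa [sq] at this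
    have h2 : p * p ∣ x ^ 2 + D := by
      rw [h]
      refine Dvd.dvd.mul_left ?_ 4
      have hyy : p * p ∣ y ^ 2 := by rw [sq]; exact mul_dvd_mul py py
      exact hyy.trans (pow_dvd_pow y hg)
    have hD : p * p ∣ D := by
      have := (Nat.dvd_add_right h1).mp h2
      simpa using this
    exact pp.not_isUnit (hsf p hD)
  refine ⟨hxodd, hD4, hgxy, ?_⟩
  by_contra hne
  obtain ⟨p, pp, pdvd⟩ := Nat.exists_prime_and_dvd hne
  have px : p ∣ x := pdvd.trans (Nat.gcd_dvd_left x D)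
  have pD : p ∣ D := pdvd.trans (Nat.gcd_dvd_right x D)
  have hp4 : p ∣ 4 * y ^ g := by
    rw [← h]; exact Dvd.dvd.add (px.trans (dvd_pow_self x two_ne_zero)) pD
  have hp2 : p ≠ 2 := by
    rintro rfl
    rw [Nat.odd_iff] at hxodd
    obtain ⟨c, rfl⟩ := px
    omega
  have py : p ∣ y := by
    rcases pp.dvd_mul.mp hp4 with h4 | hyg
    · have : p ∣ 2 := by
        have : (4 : ℕ) = 2 ^ 2 := by norm_num
        exact pp.dvd_of_dvd_pow (this ▸ h4)
      have := (Nat.prime_dvd_prime_iff_eq pp Nat.prime_two).mp this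
      exact absurd this hp2
    · exact pp.dvd_of_dvd_pow hyg
  have : p ∣ 1 := hgxy ▸ Nat.dvd_gcd px py
  exact pp.one_lt.ne' (Nat.dvd_one.mp this)

lemma sqrtNeg_sq (d : ℕ) : sqrtNeg d ^ 2 = -(d : ℂ) := by
  have h : ((Real.sqrt d : ℝ) : ℂ) ^ 2 = (d : ℂ) := by
    rw [← Complex.ofReal_pow, Real.sq_sqrt (Nat.cast_nonneg d)]; simp
  rw [sqrtNeg, mul_pow, Complex.I_sq, h]
  ring

lemma minpoly_sqrtNeg (d : ℕ) (hd : 0 < d) :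
    minpoly ℚ (sqrtNeg d) = X ^ 2 + C (d : ℚ) := by
  refine (minpoly.eq_of_irreducible_of_monic ?_ ?_ (monic_X_pow_add_C _ two_ne_zero)).symm
  · rw [irreducible_iff_roots_eq_zero_of_degree_le_three
      (by rw [natDegree_X_pow_add_C]) (by rw [natDegree_X_pow_add_C]; norm_num)]
    rw [Multiset.eq_zero_iff_forall_notMem]
    intro r hr
    rw [mem_roots (X_pow_add_C_ne_zero two_pos _), IsRoot.def, eval_add, eval_pow, eval_X,
      eval_C] at hr
    have : (0:ℚ) < (d:ℚ) := by exact_mod_cast hd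
    nlinarith [sq_nonneg r]
  · have h : ((Real.sqrt d : ℝ) : ℂ) ^ 2 = (d : ℂ) := by
      rw [← Complex.ofReal_pow, Real.sq_sqrt (Nat.cast_nonneg d)]; simp
    simp only [map_add, map_pow, aeval_X, aeval_C, sqrtNeg, mul_pow, Complex.I_sq, h]
    push_cast
    ring

lemma finrank_Kneg (d : ℕ) (hd : 0 < d) : Module.finrank ℚ (Kneg d) = 2 := by
  have := IntermediateField.adjoin.finrank (isIntegral_sqrtNeg d)
  rw [minpoly_sqrtNeg d hd, natDegree_X_pow_add_C] at this
  exact this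

set_option maxHeartbeats 1000000 in
set_option synthInstance.maxHeartbeats 400000 in
lemma mainAlg (g d x y : ℕ) (hg : 2 ≤ g) (hd : 0 < d) (hy : 0 < y)
    (h : x ^ 2 + d = 4 * y ^ g) (hgxd : Nat.gcd x d = 1) :
    ∃ β : RingOfIntegers (Kneg d), ((β : Kneg d) : ℂ) = ((x : ℂ) + sqrtNeg d) / 2 ∧
      ∃ 𝔞 : Ideal (RingOfIntegers (Kneg d)),
        𝔞 ^ g = Ideal.span {β} ∧ Ideal.absNorm 𝔞 = y := by
  classical
  have hmem : sqrtNeg d ∈ Kneg d := IntermediateField.mem_adjoin_simple_self ℚ (sqrtNeg d)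
  set s : Kneg d := ⟨sqrtNeg d, hmem⟩ with hs
  set βK : Kneg d := ((x : Kneg d) + s) / 2 with hβK
  have hcoe : ((βK : Kneg d) : ℂ) = ((x : ℂ) + sqrtNeg d) / 2 := by
    rw [hβK]; push_cast; rfl
  have hh : (x:ℂ)^2 + (d:ℂ) = 4*(y:ℂ)^g := by exact_mod_cast h
  have hsq := sqrtNeg_sq d
  -- the key multiplicative relation in ℂ
  have hC : ((x:ℂ) + sqrtNeg d)/2 * ((x:ℂ) - ((x:ℂ)+sqrtNeg d)/2) = (y:ℂ)^g := by
    linear_combination hh/4 - hsq/4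
  have hkey : βK * ((x : Kneg d) - βK) = (y : Kneg d)^g := by
    apply Subtype.coe_injective
    push_cast
    rw [hcoe]
    exact hC
  have hint : IsIntegral ℤ βK := by
    refine ⟨X^2 - C (x:ℤ) * X + C ((y:ℤ)^g), by monicity!, ?_⟩
    have h0 : βK^2 - (x : Kneg d)*βK + (y : Kneg d)^g = 0 := by linear_combination -hkey
    have he : eval₂ (algebraMap ℤ (Kneg d)) βK (X^2 - C (x:ℤ) * X + C ((y:ℤ)^g))
        = βK^2 - (x : Kneg d)*βK + (y : Kneg d)^g := by
      simp only [eval₂_add, eval₂_sub, eval₂_mul, eval₂_pow, eval₂_X, eval₂_C]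
      push_cast
      ring
    exact he.trans h0
  set O := RingOfIntegers (Kneg d)
  set β : O := ⟨βK, hint⟩ with hβ
  have hβcoe : (β : Kneg d) = βK := rfl
  set β' : O := (x : O) - β with hβ'
  have hβ'coe : (β' : Kneg d) = (x : Kneg d) - βK := by
    rw [hβ']; push_cast [hβcoe]; rfl
  have hinj := NumberField.RingOfIntegers.coe_injective (K := Kneg d)
  have hmulO : β * β' = (y : O)^g := by
    apply hinj
    push_cast [hβcoe, hβ'coe]
    exact hkey
  set I : Ideal O := Ideal.span {β} with hI
  set J : Ideal O := Ideal.span {β'} with hJ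
  have hIJ : I * J = (Ideal.span {(y : O)})^g := by
    rw [hI, hJ, Ideal.span_singleton_mul_span_singleton, hmulO, Ideal.span_singleton_pow]
  have hβI : β ∈ I ⊔ J := Ideal.mem_sup_left (Ideal.mem_span_singleton_self β)
  have hβ'J : β' ∈ I ⊔ J := Ideal.mem_sup_right (Ideal.mem_span_singleton_self β')
  have hs2K : s^2 = -(d : Kneg d) := by
    apply Subtype.coe_injective
    push_cast
    exact hsq
  have hdiff : ((d : ℕ) : O) = -((β - β')*(β - β')) := by
    apply hinj
    push_cast [hβcoe, hβ'coe]
    have : βK - ((x : Kneg d) - βK) = s := by rw [hβK]; ring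
    rw [this]
    linear_combination hs2K
  have hsup : I ⊔ J = ⊤ := by
    rw [Ideal.eq_top_iff_one]
    have hcop : IsCoprime (x:ℤ) (d:ℤ) := by
      rw [Int.isCoprime_iff_gcd_eq_one, Int.gcd_natCast_natCast]; exact hgxd
    obtain ⟨a, b, hab⟩ := hcop
    have h1 : ((a*x + b*d : ℤ) : O) = 1 := by rw [hab]; simp
    push_cast at h1
    have e1 : ((b * (d:ℤ) : ℤ) : O) = (b:O) * ((d:ℕ):O) := by erw [Int.cast_mul, Int.cast_natCast]
    have e2 : ((a * (x:ℤ) : ℤ) : O) = (a:O) * ((x:ℕ):O) := by erw [Int.cast_mul, Int.cast_natCast]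
    rw [e1, e2] at h1
    rw [← h1]
    refine add_mem (Ideal.mul_mem_left _ _ ?_) (Ideal.mul_mem_left _ _ ?_)
    · have : ((x : ℕ) : O) = β + β' := by rw [hβ']; ring
      rw [this]; exact add_mem hβI hβ'J
    · rw [hdiff]
      exact neg_mem (Ideal.mul_mem_left _ _ (sub_mem hβI hβ'J))
  -- gcd monoid structure on ideals
  letI := UniqueFactorizationMonoid.toNormalizedGCDMonoid (Ideal O)
  have hu : IsUnit (gcd I J) := by
    rw [Ideal.isUnit_iff]
    refine le_antisymm le_top ?_
    rw [← hsup]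
    exact sup_le (Ideal.le_of_dvd (gcd_dvd_left I J)) (Ideal.le_of_dvd (gcd_dvd_right I J))
  obtain ⟨𝔞, h𝔞⟩ := exists_eq_pow_of_mul_eq_pow hu hIJ
  -- the norm computation
  have hintQ : IsIntegral ℚ βK := IsIntegral.of_finite ℚ βK
  have hnd : (X^2 - C (x:ℚ) * X + C ((y:ℚ)^g)).natDegree = 2 := by compute_degree!
  have hq2monic : (X^2 - C (x:ℚ) * X + C ((y:ℚ)^g)).Monic := by monicity!
  have haev : aeval βK (X^2 - C (x:ℚ) * X + C ((y:ℚ)^g)) = 0 := by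
    have h0 : βK^2 - (x : Kneg d)*βK + (y : Kneg d)^g = 0 := by linear_combination -hkey
    have he : aeval βK (X^2 - C (x:ℚ) * X + C ((y:ℚ)^g))
        = βK^2 - (x : Kneg d)*βK + (y : Kneg d)^g := by
      simp only [map_add, map_sub, map_mul, map_pow, aeval_X, aeval_C]
      push_cast
      ring
    exact he.trans h0
  have hq2irr : Irreducible (X^2 - C (x:ℚ) * X + C ((y:ℚ)^g)) := by
    rw [irreducible_iff_roots_eq_zero_of_degree_le_three (by rw [hnd]) (by rw [hnd]; norm_num)]
    rw [Multiset.eq_zero_iff_forall_notMem]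
    intro r hr
    rw [mem_roots hq2monic.ne_zero, IsRoot.def] at hr
    simp only [eval_add, eval_sub, eval_mul, eval_pow, eval_X, eval_C] at hr
    have hhq : (x:ℚ)^2 + (d:ℚ) = 4*(y:ℚ)^g := by exact_mod_cast h
    have hdq : (0:ℚ) < (d:ℚ) := by exact_mod_cast hd
    nlinarith [sq_nonneg (2*r - (x:ℚ))]
  have hmin : minpoly ℚ βK = X^2 - C (x:ℚ) * X + C ((y:ℚ)^g) :=
    (minpoly.eq_of_irreducible_of_monic hq2irr haev hq2monic).symm
  have hnorm : Algebra.norm ℚ (βK : Kneg d) = (y : ℚ)^g := by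
    set F : IntermediateField ℚ ↥(Kneg d) := ℚ⟮βK⟯ with hF
    have hfr : Module.finrank ℚ ↥F = 2 := by
      rw [hF, IntermediateField.adjoin.finrank hintQ, hmin, hnd]
    have htower := Module.finrank_mul_finrank ℚ ↥F ↥(Kneg d)
    have htop : Module.finrank ↥F ↥(Kneg d) = 1 := by
      rw [hfr, finrank_Kneg d hd] at htower
      omega
    rw [Algebra.norm_eq_norm_adjoin ℚ βK, htop, pow_one]
    have hpb := Algebra.PowerBasis.norm_gen_eq_coeff_zero_minpoly
      (IntermediateField.adjoin.powerBasis hintQ)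
    rw [IntermediateField.adjoin.powerBasis_gen, IntermediateField.adjoin.powerBasis_dim,
      IntermediateField.minpoly_gen, hmin, hnd] at hpb
    rw [hpb]
    simp only [coeff_add, coeff_sub, coeff_X_pow, coeff_C_mul, coeff_X_zero, coeff_C]
    norm_num
  have habs : Ideal.absNorm I = y ^ g := by
    rw [hI, Ideal.absNorm_span_singleton]
    have : (Algebra.norm ℤ β : ℚ) = ((y:ℤ)^g : ℤ) := by
      rw [Algebra.coe_norm_int, hβcoe, hnorm]; push_cast; ring
    have hz : Algebra.norm ℤ β = (y:ℤ)^g := by exact_mod_cast this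
    rw [hz]
    simp [Int.natAbs_pow]
  refine ⟨β, hcoe, 𝔞, h𝔞.symm, ?_⟩
  have : Ideal.absNorm 𝔞 ^ g = y ^ g := by
    rw [← map_pow, ← h𝔞, habs]
  exact Nat.pow_left_injective (by omega) this

theorem stmt5 (g D X Y : ℕ) (hg : 2 ≤ g) (hD : 3 < D) (hsf : Squarefree D)
    (hX : 0 < X) (hY : 0 < Y) (h : X ^ 2 + D = 4 * Y ^ g) :
    Odd X ∧ D % 4 = 3 ∧ Nat.gcd X Y = 1 ∧
    ∃ β : RingOfIntegers (Kneg D), ((β : Kneg D) : ℂ) = ((X : ℂ) + sqrtNeg D) / 2 ∧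
      ∃ 𝔞 : Ideal (RingOfIntegers (Kneg D)),
        𝔞 ^ g = Ideal.span {β} ∧ Ideal.absNorm 𝔞 = Y := by
  obtain ⟨h1, h2, h3, h4⟩ := elemFacts g D X Y hg hsf h
  obtain ⟨β, hβ, 𝔞, h𝔞, hN⟩ := mainAlg g D X Y hg (by omega) hY h h4
  exact ⟨h1, h2, h3, β, hβ, 𝔞, h𝔞, hN⟩
end

section
/- Let g ≥ 3 be an integer. The polynomial f(x,y,z) = 2(x^g + y^g)z^g − (x − y)² z^{2g} − (Σ_{i=0}^{g−1} x^{g−1−i} y^i)² is squarefree in the polynomial ring ℤ[x,y,z]; that is, there is no non-unit polynomial k ∈ ℤ[x,y,z] with k² dividing f. -/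
open MvPolynomial

/-- `f(x,y,z) = 2(x^g+y^g)z^g - (x-y)² z^{2g} - (∑_{i=0}^{g-1} x^{g-1-i} y^i)²`
as an element of `ℤ[x,y,z]`. -/
noncomputable def fP (g : ℕ) : MvPolynomial (Fin 3) ℤ :=
  2 * (X 0 ^ g + X 1 ^ g) * X 2 ^ g - (X 0 - X 1) ^ 2 * X 2 ^ (2 * g)
    - (∑ i ∈ Finset.range g, X 0 ^ (g - 1 - i) * X 1 ^ i) ^ 2

namespace SqfreeAux

/-- geometric sum identity -/
lemma hA (g : ℕ) : (X 0 - X 1 : MvPolynomial (Fin 3) ℤ) *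
    (∑ i ∈ Finset.range g, X 0 ^ (g - 1 - i) * X 1 ^ i) = X 0 ^ g - X 1 ^ g := by
  have h := geom_sum₂_mul (X 1 : MvPolynomial (Fin 3) ℤ) (X 0) g
  calc (X 0 - X 1 : MvPolynomial (Fin 3) ℤ) *
      (∑ i ∈ Finset.range g, X 0 ^ (g - 1 - i) * X 1 ^ i)
      = -((∑ i ∈ Finset.range g, (X 1:MvPolynomial (Fin 3) ℤ) ^ i * X 0 ^ (g - 1 - i)) * (X 1 - X 0)) := by
        rw [Finset.sum_mul, Finset.mul_sum, ← Finset.sum_neg_distrib]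
        exact Finset.sum_congr rfl fun i _ => by ring
    _ = X 0 ^ g - X 1 ^ g := by rw [h]; ring

/-- evaluation at (1,0,0) -/
lemma hEval (g : ℕ) (hg : 3 ≤ g) : eval ![1, 0, 0] (fP g) = -1 := by
  have h1 : g ≠ 0 := by omega
  have h2 : 2 * g ≠ 0 := by omega
  simp only [fP, map_sub, map_mul, map_add, map_pow, eval_X, map_sum, map_ofNat,
    Matrix.cons_val_zero, Matrix.cons_val_one, Matrix.head_cons, Matrix.cons_val_two,
    Matrix.tail_cons]
  rw [zero_pow h1, zero_pow h2]
  rw [Finset.sum_eq_single 0 (fun i _ hi => by rw [zero_pow hi]; ring) (by simp [h1])]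
  simp

/-- evaluation at (0,1,0) -/
lemma hEval' (g : ℕ) (hg : 3 ≤ g) : eval ![0, 1, 0] (fP g) = -1 := by
  have h1 : g ≠ 0 := by omega
  have h2 : 2 * g ≠ 0 := by omega
  simp only [fP, map_sub, map_mul, map_add, map_pow, eval_X, map_sum, map_ofNat,
    Matrix.cons_val_zero, Matrix.cons_val_one, Matrix.head_cons, Matrix.cons_val_two,
    Matrix.tail_cons]
  rw [Finset.sum_eq_single (g - 1)
    (fun i hi hne => by
      rw [zero_pow (show g - 1 - i ≠ 0 by
        simp only [Finset.mem_range] at hi; omega)]; ring)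
    (by intro h; simp at h; omega)]
  norm_num [zero_pow h1, zero_pow h2]

/-- key identity -/
lemma hQ (g : ℕ) :
    (X 0 - X 1 : MvPolynomial (Fin 3) ℤ) ^ 2 * fP g
      + ((X 0 ^ g + X 1 ^ g) - (X 0 - X 1) ^ 2 * X 2 ^ g) ^ 2
      = 4 * X 0 ^ g * X 1 ^ g := by
  unfold fP
  linear_combination (-(X 0 - X 1) *
    (∑ i ∈ Finset.range g, (X 0:MvPolynomial (Fin 3) ℤ) ^ (g - 1 - i) * X 1 ^ i)
    - ((X 0:MvPolynomial (Fin 3) ℤ) ^ g - X 1 ^ g)) * hA g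

/-- the partial derivative in `z` -/
lemma hD (g : ℕ) (hg : 3 ≤ g) :
    pderiv 2 (fP g) = C (2 * g : ℤ) * X 2 ^ (g - 1)
      * ((X 0 ^ g + X 1 ^ g) - (X 0 - X 1) ^ 2 * X 2 ^ g) := by
  obtain ⟨a, rfl⟩ : ∃ a, g = a + 1 := ⟨g - 1, by omega⟩
  have hp2 : pderiv (R := ℤ) 2 (2 : MvPolynomial (Fin 3) ℤ) = 0 := by
    rw [show (2 : MvPolynomial (Fin 3) ℤ) = C 2 by simp]; exact pderiv_C
  have hf1 : pderiv 2 ((∑ i ∈ Finset.range (a+1),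
      (X 0:MvPolynomial (Fin 3) ℤ) ^ (a + 1 - 1 - i) * X 1 ^ i)) = 0 := by
    rw [map_sum]
    refine Finset.sum_eq_zero fun i _ => ?_
    rw [pderiv_mul, pderiv_pow, pderiv_pow, pderiv_X_of_ne (by decide),
      pderiv_X_of_ne (by decide)]
    ring
  simp only [fP, map_sub, pderiv_mul, pderiv_pow, hf1, hp2, pderiv_X_self,
    pderiv_X_of_ne (show (0:Fin 3) ≠ 2 by decide), pderiv_X_of_ne (show (1:Fin 3) ≠ 2 by decide),
    map_add, map_pow, map_mul, map_one, map_ofNat, map_natCast, pderiv_C]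
  push_cast
  rw [show 2 * (a + 1) - 1 = a + (a + 1) by omega]
  ring

lemma primeX (j : Fin 3) : Prime (X j : MvPolynomial (Fin 3) ℤ) := by
  have h0 : Prime (X 0 : MvPolynomial (Fin 3) ℤ) := by
    rw [← MulEquiv.prime_iff (finSuccEquiv ℤ 2).toMulEquiv]
    have : (finSuccEquiv ℤ 2).toMulEquiv (X 0) = Polynomial.X := finSuccEquiv_X_zero
    rw [this]
    exact Polynomial.prime_X
  rw [show (X j : MvPolynomial (Fin 3) ℤ) = renameEquiv ℤ (Equiv.swap (0 : Fin 3) j) (X 0) by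
    simp [renameEquiv_apply, rename_X, Equiv.swap_apply_left]]
  exact ((MulEquiv.prime_iff (renameEquiv ℤ (Equiv.swap (0 : Fin 3) j)).toMulEquiv).mpr h0)

/-- if a prime divides `fP g` and vanishes-like: a divisor `d` of `fP g` with
`eval v d = 0` for a point where `fP` evaluates to `-1` is impossible. -/
lemma evalContra {d : MvPolynomial (Fin 3) ℤ} {v : Fin 3 → ℤ}
    (hd : d ∣ fP g) (hv : eval v (fP g) = -1) (h0 : eval v d = 0) : False := by
  obtain ⟨m, hm⟩ := hd
  have := congrArg (eval v) hm
  rw [hv, map_mul, h0, zero_mul] at this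
  exact absurd this (by norm_num)

/-- a prime dividing a nonzero constant, and dividing `fP g`, is impossible. -/
lemma constContra (g : ℕ) (hg : 3 ≤ g) {q : MvPolynomial (Fin 3) ℤ} (hq : Prime q)
    (hqf : q ∣ fP g) {c : ℤ} (hc : c ≠ 0) (hqc : q ∣ C c) : False := by
  by_cases hcu : IsUnit c
  · exact hq.not_unit (isUnit_of_dvd_unit hqc (hcu.map C))
  · obtain ⟨f, hfp, hfa⟩ := UniqueFactorizationMonoid.exists_prime_factors c hc
    have hdvd : q ∣ (f.map (C : ℤ →+* MvPolynomial (Fin 3) ℤ)).prod := by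
      rw [← map_multiset_prod]
      exact hqc.trans (hfa.map (C : ℤ →+* MvPolynomial (Fin 3) ℤ).toMonoidHom).symm.dvd
    obtain ⟨r, hrf, hqr⟩ := hq.exists_mem_multiset_dvd hdvd
    obtain ⟨b, hbf, rfl⟩ := Multiset.mem_map.mp hrf
    have hb : Prime b := hfp b hbf
    have hCb : Prime (C b : MvPolynomial (Fin 3) ℤ) := (prime_C_iff (Fin 3)).mpr hb
    -- q ∣ C b, q not a unit, C b irreducible ⇒ C b ∣ q
    obtain ⟨u, hu⟩ := hqr
    rcases hCb.irreducible.isUnit_or_isUnit hu with h | h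
    · exact hq.not_unit h
    · obtain ⟨v, rfl⟩ := h
      have : C b ∣ fP g := by
        refine dvd_trans ⟨(v⁻¹ : _), ?_⟩ hqf
        rw [hu]
        simp [mul_assoc]
      obtain ⟨m, hm⟩ := this
      have := congrArg (eval ![1, 0, 0]) hm
      rw [hEval g hg, map_mul, eval_C] at this
      exact hb.not_unit (isUnit_of_dvd_unit ⟨eval ![1,0,0] m, this⟩ (isUnit_one.neg))

end SqfreeAux

open SqfreeAux in
set_option maxHeartbeats 1000000 in
theorem stmt7 (g : ℕ) (hg : 3 ≤ g) : Squarefree (fP g) := by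
  have hne : fP g ≠ 0 := fun h => by
    have := hEval g hg; rw [h] at this; simp at this
  intro k hk
  by_contra hku
  have hk0 : k ≠ 0 := by
    rintro rfl
    rw [zero_mul, zero_dvd_iff] at hk
    exact hne hk
  obtain ⟨q, hqirr, hqk⟩ := WfDvdMonoid.exists_irreducible_factor hku hk0
  have hq : Prime q := UniqueFactorizationMonoid.irreducible_iff_prime.mp hqirr
  have hqq : q * q ∣ fP g := (mul_dvd_mul hqk hqk).trans hk
  have hqf : q ∣ fP g := (dvd_mul_right q q).trans hqq
  -- q divides the z-derivative
  have hqd : q ∣ pderiv 2 (fP g) := by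
    obtain ⟨h, hh⟩ := hqq
    rw [hh, pderiv_mul, pderiv_mul]
    exact dvd_add (dvd_mul_of_dvd_left
      (dvd_add (dvd_mul_left q _) (dvd_mul_right q _)) _)
      (dvd_mul_of_dvd_left (dvd_mul_right q _) _)
  rw [hD g hg] at hqd
  rcases hq.dvd_mul.mp hqd with hqd' | hQdvd
  · rcases hq.dvd_mul.mp hqd' with hc | hz
    · -- q ∣ C (2g)
      exact constContra g hg hq hqf (by positivity) hc
    · -- q ∣ X 2 ^ (g-1) hence X 2 ∣ fP
      have hqX : q ∣ X 2 := hq.dvd_of_dvd_pow hz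
      obtain ⟨u, hu⟩ := hqX
      rcases (primeX 2).irreducible.isUnit_or_isUnit hu with h | h
      · exact hq.not_unit h
      · obtain ⟨v, rfl⟩ := h
        have hX2 : (X 2 : MvPolynomial (Fin 3) ℤ) ∣ fP g := by
          refine dvd_trans ⟨(v⁻¹ : _), ?_⟩ hqf
          rw [hu]; simp [mul_assoc]
        exact evalContra hX2 (hEval g hg) (by simp)
  · -- q ∣ Q, hence q divides 4 x^g y^g
    have h4 : q ∣ (4 : MvPolynomial (Fin 3) ℤ) * X 0 ^ g * X 1 ^ g := by
      rw [← hQ g]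
      exact dvd_add (dvd_mul_of_dvd_right hqf _) (dvd_pow hQdvd (by norm_num))
    rcases hq.dvd_mul.mp h4 with h4' | hy
    · rcases hq.dvd_mul.mp h4' with hc | hx
      · -- q ∣ 4
        refine constContra g hg hq hqf (show (4:ℤ) ≠ 0 by norm_num) ?_
        rw [show (C (4:ℤ) : MvPolynomial (Fin 3) ℤ) = 4 from map_ofNat C 4]
        exact hc
      · -- q ∣ X 0 ^ g
        have hqX : q ∣ X 0 := hq.dvd_of_dvd_pow hx
        obtain ⟨u, hu⟩ := hqX
        rcases (primeX 0).irreducible.isUnit_or_isUnit hu with h | h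
        · exact hq.not_unit h
        · obtain ⟨v, rfl⟩ := h
          have hX0 : (X 0 : MvPolynomial (Fin 3) ℤ) ∣ fP g := by
            refine dvd_trans ⟨(v⁻¹ : _), ?_⟩ hqf
            rw [hu]; simp [mul_assoc]
          exact evalContra hX0 (hEval' g hg) (by simp)
    · -- q ∣ X 1 ^ g
      have hqX : q ∣ X 1 := hq.dvd_of_dvd_pow hy
      obtain ⟨u, hu⟩ := hqX
      rcases (primeX 1).irreducible.isUnit_or_isUnit hu with h | h
      · exact hq.not_unit h
      · obtain ⟨v, rfl⟩ := h
        have hX1 : (X 1 : MvPolynomial (Fin 3) ℤ) ∣ fP g := by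
          refine dvd_trans ⟨(v⁻¹ : _), ?_⟩ hqf
          rw [hu]; simp [mul_assoc]
        exact evalContra hX1 (hEval g hg) (by simp)
end

section
/- Let g ≥ 5 be an integer. There exist constants c₁, c₂ > 0 and X₀ > 0, depending only on g, such that for all real X ≥ X₀ the following holds: for every integer triple (x, y, z) with X^{1/(2(g−1))}/(2⁴g²) < x < ((2^{2g−4}g^{g−2}+1)/(2^{2g}g^g))·X^{1/(2(g−1))}, the same bounds for y, and X^{(g−2)/(2g(g−1))}/2 < z < X^{(g−2)/(2g(g−1))}, one has 0 < f(x,y,z) and c₁·X ≤ f(x,y,z) ≤ c₂·X, where f(x,y,z) = 2(x^g + y^g)z^g − (x − y)² z^{2g} − (Σ_{i=0}^{g−1} x^{g−1−i} y^i)². -/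
/-- `f₁(a,b) = ∑_{i=0}^{g-1} a^{g-1-i} b^i`. -/
def f1 (g : ℕ) (a b : ℤ) : ℤ := ∑ i ∈ Finset.range g, a ^ (g - 1 - i) * b ^ i

/-- `f(a,b,n) = 2(a^g+b^g)n^g - (a-b)² n^{2g} - f₁(a,b)²`. -/
def f (g : ℕ) (a b n : ℤ) : ℤ :=
  2 * (a ^ g + b ^ g) * n ^ g - (a - b) ^ 2 * n ^ (2 * g) - (f1 g a b) ^ 2

theorem stmt10 (g : ℕ) (hg : 5 ≤ g) :
    ∃ c₁ c₂ X₀ : ℝ, 0 < c₁ ∧ 0 < c₂ ∧ 0 < X₀ ∧ ∀ X : ℝ, X₀ ≤ X →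
      ∀ x y z : ℤ,
        X ^ ((1:ℝ) / (2 * ((g:ℝ) - 1))) / (2 ^ 4 * (g:ℝ) ^ 2) < (x : ℝ) →
        (x : ℝ) < ((2:ℝ) ^ (2 * g - 4) * (g:ℝ) ^ (g - 2) + 1) / ((2:ℝ) ^ (2 * g) * (g:ℝ) ^ g)
          * X ^ ((1:ℝ) / (2 * ((g:ℝ) - 1))) →
        X ^ ((1:ℝ) / (2 * ((g:ℝ) - 1))) / (2 ^ 4 * (g:ℝ) ^ 2) < (y : ℝ) →
        (y : ℝ) < ((2:ℝ) ^ (2 * g - 4) * (g:ℝ) ^ (g - 2) + 1) / ((2:ℝ) ^ (2 * g) * (g:ℝ) ^ g)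
          * X ^ ((1:ℝ) / (2 * ((g:ℝ) - 1))) →
        X ^ (((g:ℝ) - 2) / (2 * (g:ℝ) * ((g:ℝ) - 1))) / 2 < (z : ℝ) →
        (z : ℝ) < X ^ (((g:ℝ) - 2) / (2 * (g:ℝ) * ((g:ℝ) - 1))) →
        0 < f g x y z ∧ c₁ * X ≤ (f g x y z : ℝ) ∧ (f g x y z : ℝ) ≤ c₂ * X := by
  have hgR : (0:ℝ) < (g:ℝ) := by
    have : 0 < g := by omega
    exact_mod_cast this
  refine ⟨2/((2:ℝ)^(5*g)*(g:ℝ)^(2*g)), (2:ℝ)^(g+2)/((2:ℝ)^(4*g)*(g:ℝ)^(2*g)), 1,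
    by positivity, by positivity, one_pos, ?_⟩
  intro X hX x y z hx1 hx2 hy1 hy2 hz1 hz2
  have hg5 : (5:ℝ) ≤ (g:ℝ) := by exact_mod_cast hg
  have hX0 : (0:ℝ) < X := by linarith
  have hgm1 : ((g:ℝ) - 1) ≠ 0 := by linarith
  have hgne : (g:ℝ) ≠ 0 := by linarith
  set p := X ^ ((1:ℝ)/(2*((g:ℝ)-1))) with hpdef
  set q := X ^ (((g:ℝ)-2)/(2*(g:ℝ)*((g:ℝ)-1))) with hqdef
  have hp0 : 0 < p := Real.rpow_pos_of_pos hX0 _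
  have hq0 : 0 < q := Real.rpow_pos_of_pos hX0 _
  have hcg2 : ((g - 2 : ℕ) : ℝ) = (g:ℝ) - 2 := by
    have h2 : 2 ≤ g := by omega
    push_cast [h2]
    ring
  have hc2g2 : ((2*g - 2 : ℕ) : ℝ) = 2*(g:ℝ) - 2 := by
    have h2 : 2 ≤ 2*g := by omega
    push_cast [h2]
    ring
  have hqg : q ^ g = p ^ (g - 2) := by
    rw [hqdef, hpdef, ← Real.rpow_natCast (X ^ ((1:ℝ)/(2*((g:ℝ)-1)))) (g-2),
        ← Real.rpow_natCast (X ^ (((g:ℝ)-2)/(2*(g:ℝ)*((g:ℝ)-1)))) g,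
        ← Real.rpow_mul hX0.le, ← Real.rpow_mul hX0.le, hcg2]
    congr 1
    field_simp
  have hpX : p ^ (2*g - 2) = X := by
    rw [hpdef, ← Real.rpow_natCast _ (2*g-2), ← Real.rpow_mul hX0.le, hc2g2]
    rw [show (1/(2*((g:ℝ)-1))) * (2*(g:ℝ)-2) = 1 by field_simp]
    exact Real.rpow_one X
  -- split the coefficient
  have hsplitp : ((2:ℝ) ^ (2*g-4) * (g:ℝ)^(g-2) + 1) / ((2:ℝ)^(2*g) * (g:ℝ)^g) * p
      = p/(2^4*(g:ℝ)^2) + p/((2:ℝ)^(2*g)*(g:ℝ)^g) := by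
    rw [← pow_sub_mul_pow (2:ℝ) (show 4 ≤ 2*g by omega),
        ← pow_sub_mul_pow (g:ℝ) (show 2 ≤ g by omega)]
    have h1 : (0:ℝ) < (2:ℝ)^(2*g-4) := by positivity
    have h2 : (0:ℝ) < (g:ℝ)^(g-2) := by positivity
    field_simp
  rw [hsplitp] at hx2 hy2
  set A := p / (2^4*(g:ℝ)^2) with hAdef
  set D := p / ((2:ℝ)^(2*g)*(g:ℝ)^g) with hDdef
  have hA0 : 0 < A := by rw [hAdef]; positivity
  have hD0 : 0 < D := by rw [hDdef]; positivity
  have hDA : D ≤ A := by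
    rw [hAdef, hDdef]
    apply div_le_div_of_nonneg_left hp0.le (by positivity)
    exact mul_le_mul (pow_le_pow_right₀ one_le_two (by omega))
      (pow_le_pow_right₀ (by linarith) (by omega)) (by positivity) (by positivity)
  have hx0 : 0 < (x:ℝ) := lt_trans hA0 hx1
  have hy0 : 0 < (y:ℝ) := lt_trans hA0 hy1
  have hxu : (x:ℝ) ≤ 2*A := by linarith
  have hyu : (y:ℝ) ≤ 2*A := by linarith
  have hz0 : 0 < (z:ℝ) := lt_trans (by positivity) hz1
  set w := ((z:ℝ))^g with hwdef
  have hw0 : 0 < w := by rw [hwdef]; positivity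
  have hwub : w ≤ p^(g-2) := by
    rw [hwdef, ← hqg]
    exact pow_le_pow_left₀ hz0.le hz2.le g
  have hwlb : p^(g-2)/2^g ≤ w := by
    rw [hwdef, ← hqg]
    calc q^g/2^g = (q/2)^g := (div_pow q 2 g).symm
      _ ≤ (z:ℝ)^g := pow_le_pow_left₀ (by positivity) hz1.le g
  -- difference bound
  have hd2 : ((x:ℝ)-(y:ℝ))^2 ≤ D^2 := sq_le_sq' (by linarith) (by linarith)
  -- key identity  D² p^{g-2} = A^g
  have hDDA : D^2 * p^(g-2) = A^g := by
    rw [hAdef, hDdef, div_pow, div_pow, div_mul_eq_mul_div]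
    rw [show p^2 * p^(g-2) = p^g by rw [← pow_add]; congr 1; omega]
    congr 1
    rw [mul_pow, mul_pow, ← pow_mul, ← pow_mul, ← pow_mul, ← pow_mul]
    congr 2 <;> omega
  have hKC1 : ((x:ℝ)-(y:ℝ))^2 * w^2 ≤ A^g * w := by
    have h1 : w^2 ≤ p^(g-2)*w := by
      rw [pow_two]
      exact mul_le_mul_of_nonneg_right hwub hw0.le
    calc ((x:ℝ)-(y:ℝ))^2 * w^2 ≤ D^2 * (p^(g-2)*w) := by
          apply mul_le_mul hd2 h1 (by positivity) (by positivity)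
      _ = A^g * w := by rw [← mul_assoc, hDDA]
  -- f1 bound
  have hF1cast : ((f1 g x y : ℤ):ℝ) = ∑ i ∈ Finset.range g, (x:ℝ)^(g-1-i)*(y:ℝ)^i := by
    rw [f1]
    push_cast
    rfl
  have hF0 : (0:ℝ) ≤ ((f1 g x y : ℤ):ℝ) := by
    rw [hF1cast]
    apply Finset.sum_nonneg
    intro i _
    exact mul_nonneg (pow_nonneg hx0.le _) (pow_nonneg hy0.le _)
  have hFub : ((f1 g x y : ℤ):ℝ) ≤ (g:ℝ) * (2*A)^(g-1) := by
    rw [hF1cast]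
    calc ∑ i ∈ Finset.range g, (x:ℝ)^(g-1-i)*(y:ℝ)^i
        ≤ ∑ _i ∈ Finset.range g, (2*A)^(g-1) := by
          apply Finset.sum_le_sum
          intro i hi
          have h1 : (x:ℝ)^(g-1-i) ≤ (2*A)^(g-1-i) := pow_le_pow_left₀ hx0.le hxu _
          have h2 : (y:ℝ)^i ≤ (2*A)^i := pow_le_pow_left₀ hy0.le hyu _
          calc (x:ℝ)^(g-1-i)*(y:ℝ)^i ≤ (2*A)^(g-1-i)*(2*A)^i :=
                mul_le_mul h1 h2 (by positivity) (by positivity)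
            _ = (2*A)^(g-1) := by
                rw [← pow_add]
                congr 1
                simp only [Finset.mem_range] at hi
                omega
      _ = (g:ℝ) * (2*A)^(g-1) := by
          rw [Finset.sum_const, Finset.card_range, nsmul_eq_mul]
  -- numeric inequality
  have hnum : (g:ℝ)^2 * 2^(2*g-2) * 2^g ≤ 2^(4*g-8) * (g:ℝ)^(2*g-4) := by
    have e1 : (g:ℝ)^(2*g-4) = (g:ℝ)^2 * (g:ℝ)^(2*g-6) := by
      rw [← pow_add]; congr 1; omega
    have e2 : (2:ℝ)^(4*g-12) ≤ (g:ℝ)^(2*g-6) := by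
      calc (2:ℝ)^(4*g-12) = ((2:ℝ)^2)^(2*g-6) := by rw [← pow_mul]; congr 1; omega
        _ ≤ (g:ℝ)^(2*g-6) := pow_le_pow_left₀ (by norm_num) (by norm_num; linarith) _
    have e3 : (2:ℝ)^(2*g-2) * 2^g = 2^(3*g-2) := by rw [← pow_add]; congr 1; omega
    have e4 : (2:ℝ)^(3*g-2) ≤ 2^(4*g-8) * 2^(4*g-12) := by
      rw [← pow_add]
      exact pow_le_pow_right₀ one_le_two (by omega)
    have h48 : (0:ℝ) < (2:ℝ)^(4*g-8) := by positivity
    rw [e1]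
    calc (g:ℝ)^2 * 2^(2*g-2) * 2^g = (g:ℝ)^2 * 2^(3*g-2) := by rw [mul_assoc, e3]
      _ ≤ (g:ℝ)^2 * (2^(4*g-8) * 2^(4*g-12)) := by
          exact mul_le_mul_of_nonneg_left e4 (by positivity)
      _ = 2^(4*g-8) * ((g:ℝ)^2 * 2^(4*g-12)) := by ring
      _ ≤ 2^(4*g-8) * ((g:ℝ)^2 * (g:ℝ)^(2*g-6)) := by
          refine mul_le_mul_of_nonneg_left ?_ h48.le
          exact mul_le_mul_of_nonneg_left e2 (by positivity)
  -- A^g * w lower bound beats f1²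
  have hpA : p = A * (2^4*(g:ℝ)^2) := by rw [hAdef]; field_simp
  have hApw : A^g * (p^(g-2)/2^g) = A^(2*g-2) * ((2:ℝ)^(4*g-8)*(g:ℝ)^(2*g-4)) / 2^g := by
    rw [hpA, mul_pow]
    rw [show ((2:ℝ)^4*(g:ℝ)^2)^(g-2) = (2:ℝ)^(4*g-8)*(g:ℝ)^(2*g-4) by
      rw [mul_pow, ← pow_mul, ← pow_mul]; congr 2 <;> omega]
    rw [show A^g * (A^(g-2) * ((2:ℝ)^(4*g-8)*(g:ℝ)^(2*g-4)) / 2^g)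
        = (A^g * A^(g-2)) * ((2:ℝ)^(4*g-8)*(g:ℝ)^(2*g-4)) / 2^g by ring]
    rw [← pow_add, show g+(g-2) = 2*g-2 from by omega]
  have hKC2 : ((f1 g x y : ℤ):ℝ)^2 ≤ A^g * w := by
    have h1 : ((f1 g x y : ℤ):ℝ)^2 ≤ ((g:ℝ) * (2*A)^(g-1))^2 := by
      apply pow_le_pow_left₀ hF0 hFub
    have h2 : ((g:ℝ) * (2*A)^(g-1))^2 = (g:ℝ)^2 * 2^(2*g-2) * A^(2*g-2) := by
      rw [show ((g:ℝ) * (2*A)^(g-1))^2 = (g:ℝ)^2 * ((2:ℝ)^(g-1))^2 * (A^(g-1))^2 from by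
            rw [mul_pow 2 A (g-1)]; ring,
          ← pow_mul, ← pow_mul, show (g-1)*2 = 2*g-2 from by omega]
    have h3 : (g:ℝ)^2 * 2^(2*g-2) * A^(2*g-2) ≤ A^(2*g-2) * ((2:ℝ)^(4*g-8)*(g:ℝ)^(2*g-4)) / 2^g := by
      have h5 : (g:ℝ)^2 * 2^(2*g-2) ≤ ((2:ℝ)^(4*g-8)*(g:ℝ)^(2*g-4)) / 2^g := by
        rw [le_div_iff₀ (by positivity)]
        exact hnum
      calc (g:ℝ)^2 * 2^(2*g-2) * A^(2*g-2) = A^(2*g-2) * ((g:ℝ)^2 * 2^(2*g-2)) := by ring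
        _ ≤ A^(2*g-2) * (((2:ℝ)^(4*g-8)*(g:ℝ)^(2*g-4)) / 2^g) :=
            mul_le_mul_of_nonneg_left h5 (by positivity)
        _ = A^(2*g-2) * ((2:ℝ)^(4*g-8)*(g:ℝ)^(2*g-4)) / 2^g := by ring
    have h4 : A^g * (p^(g-2)/2^g) ≤ A^g * w := by
      apply mul_le_mul_of_nonneg_left hwlb (by positivity)
    calc ((f1 g x y : ℤ):ℝ)^2 ≤ (g:ℝ)^2 * 2^(2*g-2) * A^(2*g-2) := by rw [← h2]; exact h1
      _ ≤ A^(2*g-2) * ((2:ℝ)^(4*g-8)*(g:ℝ)^(2*g-4)) / 2^g := h3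
      _ = A^g * (p^(g-2)/2^g) := hApw.symm
      _ ≤ A^g * w := h4
  have fcast : ((f g x y z : ℤ):ℝ)
      = 2*((x:ℝ)^g+(y:ℝ)^g)*w - ((x:ℝ)-(y:ℝ))^2*w^2 - ((f1 g x y : ℤ):ℝ)^2 := by
    rw [hwdef, f]
    push_cast
    rw [show ((z:ℝ))^(2*g) = (((z:ℝ))^g)^2 from pow_mul' _ 2 g]
  have hxgl : A^g ≤ (x:ℝ)^g := pow_le_pow_left₀ hA0.le hx1.le g
  have hygl : A^g ≤ (y:ℝ)^g := pow_le_pow_left₀ hA0.le hy1.le g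
  have hxgu : (x:ℝ)^g ≤ (2*A)^g := pow_le_pow_left₀ hx0.le hxu g
  have hygu : (y:ℝ)^g ≤ (2*A)^g := pow_le_pow_left₀ hy0.le hyu g
  have hMlb : 4*(A^g*w) ≤ 2*((x:ℝ)^g+(y:ℝ)^g)*w := by
    have h : 2*A^g + 2*A^g ≤ 2*((x:ℝ)^g+(y:ℝ)^g) := by linarith
    calc 4*(A^g*w) = (2*A^g+2*A^g)*w := by ring
      _ ≤ 2*((x:ℝ)^g+(y:ℝ)^g)*w := mul_le_mul_of_nonneg_right h hw0.le
  have hflb2 : 2*(A^g*w) ≤ ((f g x y z : ℤ):ℝ) := by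
    rw [fcast]
    linarith [hKC1, hKC2, hMlb]
  have e6 : p^g * p^(g-2) = p^(2*g-2) := by rw [← pow_add]; congr 1; omega
  have eK : ((2:ℝ)^4*(g:ℝ)^2)^g = (2:ℝ)^(4*g)*(g:ℝ)^(2*g) := by
    rw [mul_pow, ← pow_mul, ← pow_mul]
  have heq1 : 2/((2:ℝ)^(5*g)*(g:ℝ)^(2*g)) * X = 2*(A^g*(p^(g-2)/2^g)) := by
    rw [← hpX, hAdef, div_pow, eK,
        show (2:ℝ)^(5*g) = 2^(4*g)*2^g from by rw [← pow_add]; congr 1; omega]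
    rw [show p^(2*g-2) = p^g * p^(g-2) from e6.symm]
    field_simp
  have hlow : 2/((2:ℝ)^(5*g)*(g:ℝ)^(2*g)) * X ≤ ((f g x y z : ℤ):ℝ) := by
    rw [heq1]
    have h := mul_le_mul_of_nonneg_left hwlb (show (0:ℝ) ≤ A^g from by positivity)
    linarith [hflb2]
  have hfub : ((f g x y z : ℤ):ℝ) ≤ (2:ℝ)^(g+2)/((2:ℝ)^(4*g)*(g:ℝ)^(2*g)) * X := by
    rw [fcast]
    have hM1 : 2*((x:ℝ)^g+(y:ℝ)^g)*w ≤ 2*((2*A)^g+(2*A)^g)*p^(g-2) := by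
      have ha : 2*((x:ℝ)^g+(y:ℝ)^g) ≤ 2*((2*A)^g+(2*A)^g) := by linarith
      have hb : 0 ≤ 2*((x:ℝ)^g+(y:ℝ)^g) := by positivity
      calc 2*((x:ℝ)^g+(y:ℝ)^g)*w ≤ 2*((x:ℝ)^g+(y:ℝ)^g)*p^(g-2) :=
            mul_le_mul_of_nonneg_left hwub hb
        _ ≤ 2*((2*A)^g+(2*A)^g)*p^(g-2) := mul_le_mul_of_nonneg_right ha (by positivity)
    have hM2 : 2*((2*A)^g+(2*A)^g)*p^(g-2) = (2:ℝ)^(g+2)/((2:ℝ)^(4*g)*(g:ℝ)^(2*g)) * X := by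
      rw [← hpX, hAdef, mul_pow, div_pow, eK,
          show (2:ℝ)^(g+2) = 2^g*2^2 from pow_add 2 g 2]
      rw [show p^(2*g-2) = p^g * p^(g-2) from e6.symm]
      field_simp
      ring
    have hT1 : 0 ≤ ((x:ℝ)-(y:ℝ))^2*w^2 := by positivity
    have hT2 : 0 ≤ ((f1 g x y : ℤ):ℝ)^2 := by positivity
    linarith [hM1, hM2.le, hM2.ge]
  have hcX : 0 < 2/((2:ℝ)^(5*g)*(g:ℝ)^(2*g)) * X := by positivity
  have hfpos : (0:ℝ) < ((f g x y z : ℤ):ℝ) := lt_of_lt_of_le hcX hlow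
  exact ⟨by exact_mod_cast hfpos, hlow, hfub⟩
end
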